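/- Let C be an abelian group, and r, s : C → C two commuting endomorphisms. If C admits an s-power infinite summation operation (equivalently, C is an s-contramodule over ℤ[s]), then C admits an (rs)-power infinite summation operation (is an rs-contramodule over ℤ[r,s]). -/

import Mathlib

open CategoryTheory Opposite

/-- `C` is an `s`-contramodule over the commutative ring `R`:
`Hom_R(R[s⁻¹],C) = 0 = Ext¹_R(R[s⁻¹],C)`. -/
def IsContramodule (R : Type) [CommRing R] (s : R) (C : Type) [AddCommGroup C]
    [Module R C] : Prop :=
  Subsingleton (Localization.Away s →ₗ[R] C) ∧
    Subsingleton (((Ext R (ModuleCat R) 1).obj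
      (op (ModuleCat.of R (Localization.Away s)))).obj (ModuleCat.of R C))

open Function
section Seq
variable {R : Type} [CommRing R] {C : Type} [AddCommGroup C] [Module R C]

/-- The telescope operator `f ↦ (n ↦ f n - a • f (n+1))` on sequences. -/
def seqT (a : R) (C : Type) [AddCommGroup C] [Module R C] : (ℕ → C) →ₗ[R] (ℕ → C) where
  toFun f n := f n - a • f (n + 1)
  map_add' f g := by funext n; simp [smul_add]; abel
  map_smul' c f := by funext n; simp only [Pi.smul_apply, RingHom.id_apply, smul_sub,
    smul_comm a c]

@[simp] lemma seqT_apply (a : R) (f : ℕ → C) (n : ℕ) :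
    seqT a C f n = f n - a • f (n + 1) := rfl

theorem seqT_mul_bijective (r s : R) (h : Bijective (seqT s C)) :
    Bijective (seqT (r * s) C) := by
  set E : (ℕ → C) ≃ₗ[R] (ℕ → C) := LinearEquiv.ofBijective _ h with hE
  have hEapp : ∀ x : ℕ → C, E x = seqT s C x := fun _ => rfl
  have hrec : ∀ (b : ℕ → C) (n : ℕ), E.symm b n = b n + s • E.symm b (n + 1) := by
    intro b n
    have h1 : E (E.symm b) = b := E.apply_symm_apply b
    rw [hEapp] at h1
    have h0 := congrFun h1 n
    rw [seqT_apply] at h0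
    rw [← h0]; abel
  have hshift : ∀ b : ℕ → C, E.symm (fun m => b (m + 1)) = fun m => E.symm b (m + 1) := by
    intro b
    apply E.injective
    rw [E.apply_symm_apply, hEapp]
    funext n
    rw [seqT_apply]
    have h1 : E (E.symm b) = b := E.apply_symm_apply b
    rw [hEapp] at h1
    have h0 := congrFun h1 (n + 1)
    rw [seqT_apply] at h0
    exact h0.symm
  constructor
  · intro f g hfg
    suffices hz : ∀ f : ℕ → C, seqT (r * s) C f = 0 → f = 0 by
      have h2 := hz (f - g) (by rw [map_sub, hfg, sub_self])
      exact sub_eq_zero.mp h2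
    intro f hf
    funext n₀
    have hTu : seqT s C (fun m => r ^ m • f (n₀ + m)) = 0 := by
      funext m
      have h2 := congrFun hf (n₀ + m)
      rw [seqT_apply] at h2
      simp only [Pi.zero_apply, sub_eq_zero] at h2 ⊢
      rw [seqT_apply, show n₀ + (m + 1) = n₀ + m + 1 from rfl, h2, ← mul_smul, ← mul_smul,
        ← sub_smul, show r ^ m * (r * s) - s * r ^ (m + 1) = 0 by ring, zero_smul]
    have hu0 : (fun m => r ^ m • f (n₀ + m)) = 0 := h.1 (by rw [hTu, map_zero])
    have h3 := congrFun hu0 0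
    simpa using h3
  · intro f
    refine ⟨fun n => E.symm (fun m => r ^ m • f (n + m)) 0, ?_⟩
    funext n
    rw [seqT_apply]
    have key : E.symm (fun m => r ^ m • f (n + m)) 0
        = f n + (r * s) • E.symm (fun m => r ^ m • f (n + 1 + m)) 0 := by
      have h1 := hrec (fun m => r ^ m • f (n + m)) 0
      have h2 : (fun m => (fun k => r ^ k • f (n + k)) (m + 1))
          = r • (fun m => r ^ m • f (n + 1 + m)) := by
        funext m
        simp only [Pi.smul_apply]
        rw [pow_succ, mul_comm, mul_smul, show n + (m + 1) = n + 1 + m by ring]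
      have h3 : E.symm (fun m => r ^ m • f (n + m)) 1
          = r • E.symm (fun m => r ^ m • f (n + 1 + m)) 0 := by
        have h4 := hshift (fun k => r ^ k • f (n + k))
        rw [h2, map_smul] at h4
        have h5 := congrFun h4.symm 0
        simpa using h5
      rw [h1, h3]
      simp only [pow_zero, one_smul, add_zero]
      rw [← mul_smul, mul_comm s r]
    rw [key]
    abel
end Seq

noncomputable section
variable {R : Type} [CommRing R] (a : R)

abbrev pa (n : ℕ) : Submonoid.powers a := ⟨a ^ n, n, rfl⟩

/-- `eₙ ↦ 1/aⁿ` -/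
def piAux : (ℕ →₀ R) →ₗ[R] Localization.Away a :=
  Finsupp.lsum R fun n => LinearMap.toSpanSingleton R _
    (IsLocalization.mk' (Localization.Away a) (1 : R) (pa a n))

lemma piAux_single (n : ℕ) (r : R) :
    piAux a (Finsupp.single n r) = r • IsLocalization.mk' (Localization.Away a) 1 (pa a n) := by
  simp [piAux]

lemma piAux_surjective : Surjective (piAux a) := by
  intro x
  obtain ⟨⟨r, ⟨s, n, rfl⟩⟩, h⟩ := IsLocalization.mk'_surjective (Submonoid.powers a) x
  refine ⟨Finsupp.single n r, ?_⟩
  rw [piAux_single, ← h]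
  rw [IsLocalization.smul_mk', mul_one]

-- dAux from t2 inlined here for testing
def shiftUp : (ℕ →₀ R) →ₗ[R] (ℕ →₀ R) := Finsupp.lmapDomain R R (· + 1)
def dAux : (ℕ →₀ R) →ₗ[R] (ℕ →₀ R) := LinearMap.id - a • shiftUp
lemma dAux_single (n : ℕ) (r : R) :
    dAux a (Finsupp.single n r) = Finsupp.single n r - a • Finsupp.single (n + 1) r := by
  simp [dAux, shiftUp, Finsupp.mapDomain_single]

lemma piAux_comp_dAux : (piAux a) ∘ₗ (dAux a) = 0 := by
  apply Finsupp.lhom_ext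
  intro n r
  simp only [LinearMap.comp_apply, dAux_single, map_sub, map_smul, piAux_single,
    LinearMap.zero_apply]
  rw [IsLocalization.smul_mk', IsLocalization.smul_mk', mul_one, IsLocalization.smul_mk',
    sub_eq_zero, IsLocalization.mk'_eq_iff_eq]
  push_cast
  ring

lemma dAux_apply_zero (b : ℕ →₀ R) : dAux a b 0 = b 0 := by
  simp [dAux, shiftUp, Finsupp.lmapDomain_apply]
  rw [Finsupp.mapDomain_notin_range]
  · simp
  · rintro ⟨m, hm⟩; exact Nat.succ_ne_zero m hm

lemma dAux_apply_succ (b : ℕ →₀ R) (m : ℕ) :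
    dAux a b (m + 1) = b (m + 1) - a * b m := by
  simp [dAux, shiftUp, Finsupp.lmapDomain_apply]
  rw [Finsupp.mapDomain_apply (fun x y h => by omega)]

lemma dAux_injective : Injective (dAux a : (ℕ →₀ R) →ₗ[R] (ℕ →₀ R)) := by
  rw [injective_iff_map_eq_zero]
  intro b hb
  ext m
  induction m with
  | zero =>
      have h0 := Finsupp.ext_iff.mp hb 0
      rw [dAux_apply_zero] at h0; simpa using h0
  | succ m ih =>
      have h0 := Finsupp.ext_iff.mp hb (m + 1)
      rw [dAux_apply_succ] at h0
      simp only [Finsupp.coe_zero, Pi.zero_apply] at h0 ih ⊢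
      rw [ih, mul_zero, sub_zero] at h0
      exact h0

variable [IsDomain R]

lemma ker_piAux (ha : a ≠ 0) (b : ℕ →₀ R) (hb : piAux a b = 0) : ∃ c, dAux a c = b := by
  classical
  set M : ℕ := b.support.sup id + 1 with hM
  have hsupp : ∀ m, M ≤ m → b m = 0 := by
    intro m hm
    by_contra hne
    have : m ∈ b.support := Finsupp.mem_support_iff.mpr hne
    have : m ≤ b.support.sup id := Finset.le_sup (f := id) this
    omega
  set g : ℕ → R := fun n => ∑ k ∈ Finset.range (n + 1), b k * a ^ (n - k) with hg
  have claimA : ∀ n, g (n + 1) = b (n + 1) + a * g n := by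
    intro n
    show (∑ k ∈ Finset.range (n + 1 + 1), b k * a ^ (n + 1 - k))
      = b (n + 1) + a * ∑ k ∈ Finset.range (n + 1), b k * a ^ (n - k)
    rw [Finset.sum_range_succ]
    simp only [Nat.sub_self, pow_zero, mul_one]
    rw [Finset.mul_sum, add_comm]
    congr 1
    apply Finset.sum_congr rfl
    intro k hk
    have hk' : k ≤ n := by simpa [Nat.lt_succ_iff] using hk
    rw [show n + 1 - k = (n - k) + 1 by omega, pow_succ]
    ring
  -- `aᴹ • piAux b = algebraMap (g M)`
  have key : (algebraMap R (Localization.Away a)) (g M)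
      = (algebraMap R (Localization.Away a) a) ^ M * piAux a b := by
    have hsub : b.support ⊆ Finset.range (M + 1) := by
      intro n hn
      have : n ≤ b.support.sup id := Finset.le_sup (f := id) hn
      simp only [Finset.mem_range]; omega
    have hsum : piAux a b = ∑ k ∈ Finset.range (M + 1),
        b k • IsLocalization.mk' (Localization.Away a) 1 (pa a k) := by
      rw [show piAux a b = b.sum (fun n r =>
          r • IsLocalization.mk' (Localization.Away a) 1 (pa a n)) from rfl]
      exact Finsupp.sum_of_support_subset b hsub _ (fun i _ => by simp)
    rw [hsum, Finset.mul_sum,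
      show g M = ∑ k ∈ Finset.range (M + 1), b k * a ^ (M - k) from rfl, map_sum]
    apply Finset.sum_congr rfl
    intro k hk
    have hk' : k ≤ M := by simpa [Nat.lt_succ_iff] using hk
    rw [Algebra.mul_smul_comm, map_mul]
    rw [show (algebraMap R (Localization.Away a) a) ^ M = algebraMap R (Localization.Away a)
      (a ^ (M - k) * a ^ k) by rw [← pow_add, show M - k + k = M by omega, map_pow]]
    rw [map_mul, mul_assoc]
    rw [show algebraMap R (Localization.Away a) (a ^ k)
        * IsLocalization.mk' (Localization.Away a) 1 (pa a k)
      = algebraMap R (Localization.Away a) 1 from IsLocalization.mk'_spec' _ 1 (pa a k)]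
    rw [map_one, mul_one, Algebra.smul_def]
  have hinj : Injective (algebraMap R (Localization.Away a)) :=
    IsLocalization.injective _ (powers_le_nonZeroDivisors_of_noZeroDivisors ha)
  have hgM : g M = 0 := by
    apply hinj
    rw [key, hb, map_zero, mul_zero]
  have hgvanish : ∀ m, M ≤ m → g m = 0 := by
    intro m hm
    induction m with
    | zero => omega
    | succ m ih =>
        rcases Nat.lt_or_ge M (m + 1) with h | h
        · have hMm : M ≤ m := by omega
          rw [claimA, ih hMm, hsupp _ hm, mul_zero, add_zero]
        · have : M = m + 1 := by omega
          rw [← this]; exact hgM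
  refine ⟨Finsupp.onFinset (Finset.range M) g (fun n hn => by
    simp only [Finset.mem_range]
    by_contra hlt
    exact hn (hgvanish n (by omega))), ?_⟩
  refine Finsupp.ext fun m => ?_
  cases m with
  | zero =>
      rw [dAux_apply_zero, Finsupp.onFinset_apply]
      show (∑ k ∈ Finset.range 1, b k * a ^ (0 - k)) = b 0
      simp
  | succ m =>
      rw [dAux_apply_succ, Finsupp.onFinset_apply, Finsupp.onFinset_apply, claimA]
      ring
end

section HomSide
variable {R : Type} [CommRing R] [IsDomain R] (a : R) {C : Type} [AddCommGroup C] [Module R C]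

theorem subsingleton_hom_iff_injective (ha : a ≠ 0) :
    Subsingleton (Localization.Away a →ₗ[R] C) ↔ Injective (seqT a C) := by
  constructor
  · intro hs
    rw [injective_iff_map_eq_zero]
    intro f hf
    set φ : (ℕ →₀ R) →ₗ[R] C :=
      Finsupp.lsum R (fun n => LinearMap.toSpanSingleton R C (f n)) with hφ
    have hφsingle : ∀ n r, φ (Finsupp.single n r) = r • f n := by
      intro n r; simp [hφ]
    have hφd : φ ∘ₗ dAux a = 0 := by
      apply Finsupp.lhom_ext
      intro n r
      have h0 := congrFun hf n
      rw [seqT_apply] at h0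
      simp only [LinearMap.comp_apply, dAux_single, map_sub, map_smul, hφsingle,
        LinearMap.zero_apply, Pi.zero_apply] at h0 ⊢
      rw [smul_comm a r, ← smul_sub, h0, smul_zero]
    have hker : LinearMap.ker (piAux a) ≤ LinearMap.ker φ := by
      intro x hx
      obtain ⟨c, hc⟩ := ker_piAux a ha x (by simpa using hx)
      rw [LinearMap.mem_ker, ← hc]
      exact DFunLike.congr_fun hφd c
    set e := LinearMap.quotKerEquivOfSurjective (piAux a) (piAux_surjective a) with he
    set g : Localization.Away a →ₗ[R] C :=
      ((LinearMap.ker (piAux a)).liftQ φ hker) ∘ₗ (e.symm : Localization.Away a →ₗ[R] _) with hgdef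
    have hgz : g = 0 := Subsingleton.elim _ _
    funext n
    have h1 : f n = g (piAux a (Finsupp.single n 1)) := by
      have h2 : (piAux a) (Finsupp.single n 1)
          = e (Submodule.Quotient.mk (Finsupp.single n 1)) := rfl
      rw [h2, hgdef]
      simp only [LinearMap.comp_apply, LinearEquiv.coe_coe, LinearEquiv.symm_apply_apply]
      rw [Submodule.liftQ_apply, hφsingle, one_smul]
    rw [Pi.zero_apply, h1, hgz, LinearMap.zero_apply]
  · intro hinj
    constructor
    intro g₁ g₂
    suffices hz : ∀ g : Localization.Away a →ₗ[R] C, g = 0 by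
      rw [hz g₁, hz g₂]
    intro g
    set f : ℕ → C := fun n => g (IsLocalization.mk' (Localization.Away a) 1 (pa a n)) with hfd
    have hTf : seqT a C f = 0 := by
      funext n
      rw [seqT_apply, Pi.zero_apply, hfd]
      simp only []
      rw [← map_smul, ← map_sub]
      have h0 : (piAux a) (dAux a (Finsupp.single n 1)) = 0 :=
        DFunLike.congr_fun (piAux_comp_dAux a) (Finsupp.single n 1)
      rw [dAux_single, map_sub, map_smul, piAux_single, piAux_single, one_smul, one_smul] at h0
      rw [h0, map_zero]
    have hf0 : f = 0 := hinj (by rw [hTf, map_zero])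
    have hgπ : g ∘ₗ piAux a = 0 := by
      apply Finsupp.lhom_ext
      intro n r
      simp only [LinearMap.comp_apply, piAux_single, map_smul, LinearMap.zero_apply]
      have := congrFun hf0 n
      rw [hfd] at this
      simp only [Pi.zero_apply] at this
      rw [this, smul_zero]
    apply LinearMap.ext
    intro x
    obtain ⟨b, rfl⟩ := piAux_surjective a x
    rw [LinearMap.zero_apply]
    exact DFunLike.congr_fun hgπ b
end HomSide

section Cat
open CategoryTheory Opposite Limits
noncomputable section
variable (R : Type) [CommRing R] [IsDomain R] (a : R)

/-- underlying objects of the 2-term complex -/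
def KX : ℕ → ModuleCat R := fun n => match n with
  | 0 => ModuleCat.of R (ℕ →₀ R)
  | 1 => ModuleCat.of R (ℕ →₀ R)
  | _ + 2 => ModuleCat.of R PUnit

/-- differentials -/
def Kd : ∀ n : ℕ, KX R (n + 1) ⟶ KX R n := fun n => match n with
  | 0 => ModuleCat.ofHom (dAux a)
  | _ + 1 => 0

/-- the 2-term complex `… → 0 → R^(ℕ) → R^(ℕ)` -/
def Kc : ChainComplex (ModuleCat R) ℕ :=
  ChainComplex.of (KX R) (Kd R a) (fun n => by
    show Kd R a (n + 1) ≫ Kd R a n = 0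
    have : Kd R a (n + 1) = 0 := rfl
    rw [this, zero_comp])

lemma Kc_d_one_zero : (Kc R a).d 1 0 = ModuleCat.ofHom (dAux a) := by
  have := ChainComplex.of_d (KX R) (Kd R a) 0
  exact this

lemma Kc_d_succ (n : ℕ) : (Kc R a).d (n + 2) (n + 1) = 0 := by
  have := ChainComplex.of_d (KX R) (Kd R a) (n + 1)
  exact this.trans rfl

lemma Kc_comp_zero :
    (Kc R a).d 1 0 ≫ ModuleCat.ofHom (piAux a) = 0 := by
  rw [Kc_d_one_zero]
  apply ModuleCat.hom_ext
  apply LinearMap.ext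
  intro x
  exact DFunLike.congr_fun (piAux_comp_dAux a) x

/-- the augmentation -/
def Kπ : Kc R a ⟶ (ChainComplex.single₀ (ModuleCat R)).obj
    (ModuleCat.of R (Localization.Away a)) :=
  (ChainComplex.toSingle₀Equiv _ _).symm ⟨ModuleCat.ofHom (piAux a), Kc_comp_zero R a⟩

lemma Kπ_f_zero : (Kπ R a).f 0 = ModuleCat.ofHom (piAux a) :=
  ChainComplex.toSingle₀Equiv_symm_apply_f_zero _ _

lemma quasiIso_Kπ (ha : a ≠ 0) : QuasiIso (Kπ R a) := by
  constructor
  intro i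
  match i with
  | 0 =>
    rw [quasiIsoAt_iff' _ 1 0 0 (by simp) (by simp)]
    refine (ShortComplex.quasiIso_iff_of_zeros' _ ?_ ?_ ?_).mpr ⟨?_, ?_⟩
    · show (Kc R a).d 0 0 = 0
      apply HomologicalComplex.shape
      simp
    · apply IsZero.eq_of_src
      exact HomologicalComplex.isZero_single_obj_X (ComplexShape.down ℕ) 0 (ModuleCat.of R (Localization.Away a)) 1 (by simp)
    · show ((ChainComplex.single₀ (ModuleCat R)).obj _).d 0 0 = 0
      apply HomologicalComplex.shape
      simp
    · -- exactness of `R^ℕ → R^ℕ → L`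
      rw [ShortComplex.moduleCat_exact_iff]
      intro x hx
      obtain ⟨c, hc⟩ : ∃ c, dAux a c = x := by
        apply ker_piAux a ha
        have h2 : ((Kπ R a).f 0) x = 0 := hx
        rw [Kπ_f_zero] at h2
        exact h2
      refine ⟨c, ?_⟩
      show ((Kc R a).d 1 0) c = x
      rw [Kc_d_one_zero]
      exact hc
    · show Epi ((Kπ R a).f 0)
      rw [Kπ_f_zero]
      exact (ModuleCat.epi_iff_surjective _).mpr (piAux_surjective a)
  | (n + 1) =>
    rw [quasiIsoAt_iff_exactAt' _ _ (ChainComplex.exactAt_succ_single_obj _ n)]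
    rw [HomologicalComplex.exactAt_iff' _ (n + 2) (n + 1) n (by simp) (by simp)]
    match n with
    | 0 =>
      rw [ShortComplex.moduleCat_exact_iff]
      intro x hx
      refine ⟨0, ?_⟩
      rw [map_zero]
      have hx' : ((Kc R a).d 1 0) x = 0 := hx
      rw [Kc_d_one_zero] at hx'
      exact (dAux_injective a (hx'.trans (map_zero _).symm)).symm
    | (m + 1) =>
      apply ShortComplex.exact_of_isZero_X₂
      exact (show IsZero (ModuleCat.of R PUnit) from ModuleCat.isZero_of_subsingleton _)

/-- the projective resolution of `R[1/a]` -/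
def Kres (ha : a ≠ 0) : ProjectiveResolution (ModuleCat.of R (Localization.Away a)) where
  complex := Kc R a
  projective n := by
    match n with
    | 0 => exact ModuleCat.projective_of_free (M := (Kc R a).X 0) Finsupp.basisSingleOne
    | 1 => exact ModuleCat.projective_of_free (M := (Kc R a).X 1) Finsupp.basisSingleOne
    | (n + 2) => exact (show IsZero (ModuleCat.of R PUnit) from
        ModuleCat.isZero_of_subsingleton _).projective
  π := Kπ R a
  quasiIso := quasiIso_Kπ R a ha
end
end Cat

section ExtSide
open CategoryTheory Opposite Limits
noncomputable section

lemma moduleCat_subsingleton_iff_isZero {R : Type} [CommRing R] (M : ModuleCat R) :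
    Subsingleton M ↔ IsZero M := by
  constructor
  · intro h
    exact ModuleCat.isZero_of_subsingleton M
  · intro h
    constructor
    intro x y
    have h1 : 𝟙 M = (0 : M ⟶ M) := h.eq_of_src _ _
    have hx : ∀ z : M, z = 0 := fun z => by
      calc z = (𝟙 M) z := rfl
        _ = (0 : M ⟶ M) z := by rw [h1]
        _ = 0 := rfl
    rw [hx x, hx y]

variable (R : Type) [CommRing R] [IsDomain R] (a : R) (C : Type) [AddCommGroup C] [Module R C]

theorem subsingleton_ext_iff_surjective (ha : a ≠ 0) :
    Subsingleton (((Ext R (ModuleCat R) 1).obj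
      (op (ModuleCat.of R (Localization.Away a)))).obj (ModuleCat.of R C)) ↔
    Surjective (seqT a C) := by
  have e := (Kres R a ha).isoExt (R := R) 1 (ModuleCat.of R C)
  rw [Equiv.subsingleton_congr e.toLinearEquiv.toEquiv]
  set Q := ((Kres R a ha).complex.linearYonedaObj R (ModuleCat.of R C)) with hQ
  rw [moduleCat_subsingleton_iff_isZero, ← HomologicalComplex.exactAt_iff_isZero_homology,
    HomologicalComplex.exactAt_iff' _ 0 1 2 (by simp) (by simp),
    ShortComplex.moduleCat_exact_iff]
  simp only [HomologicalComplex.sc', HomologicalComplex.shortComplexFunctor'_obj_X₁,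
    HomologicalComplex.shortComplexFunctor'_obj_X₂, HomologicalComplex.shortComplexFunctor'_obj_X₃,
    HomologicalComplex.shortComplexFunctor'_obj_f, HomologicalComplex.shortComplexFunctor'_obj_g]
  have hd01 : ∀ y : (Kc R a).X 0 ⟶ ModuleCat.of R C, Q.d 0 1 y = (Kc R a).d 1 0 ≫ y := by
    intro y
    rw [show Q.d 0 1 = ModuleCat.ofHom (Linear.leftComp R (ModuleCat.of R C) ((Kc R a).d 1 0))
      from ChainComplex.linearYonedaObj_d _ _ _ _ _]
    rfl
  have hsub2 : Subsingleton ((Kc R a).X 2 ⟶ ModuleCat.of R C) := by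
    constructor
    intro f g
    apply ModuleCat.hom_ext
    apply LinearMap.ext
    intro x
    have hx : x = 0 := Subsingleton.elim (α := PUnit.{1}) x 0
    rw [hx, map_zero, map_zero]
  constructor
  · -- exactness → surjectivity
    intro hex f
    set x : (Kc R a).X 1 ⟶ ModuleCat.of R C :=
      ModuleCat.ofHom (Finsupp.lsum R fun n => LinearMap.toSpanSingleton R C (f n)) with hx
    obtain ⟨y0, hy⟩ := hex x (Subsingleton.elim (α := ((Kc R a).X 2 ⟶ ModuleCat.of R C)) _ _)
    let y : (Kc R a).X 0 ⟶ ModuleCat.of R C := y0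
    have hy' : (Kc R a).d 1 0 ≫ y = x := by
      rw [← hd01 y]
      exact hy
    refine ⟨fun n => y (Finsupp.single n 1), ?_⟩
    funext n
    rw [seqT_apply]
    have h1 : ((Kc R a).d 1 0 ≫ y) (Finsupp.single n 1) = x (Finsupp.single n 1) := by rw [hy']
    have h2 : ((Kc R a).d 1 0 ≫ y) (Finsupp.single n 1)
        = y (dAux a (Finsupp.single n 1)) := by
      rw [Kc_d_one_zero]
      rfl
    erw [h2, dAux_single, map_sub, map_smul] at h1
    rw [h1, hx]
    show (Finsupp.lsum R fun n => LinearMap.toSpanSingleton R C (f n)) (Finsupp.single n 1) = f n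
    rw [Finsupp.lsum_single, LinearMap.toSpanSingleton_apply, one_smul]
  · -- surjectivity → exactness
    intro hsurj x0 _
    let x : (Kc R a).X 1 ⟶ ModuleCat.of R C := x0
    set fx : ℕ → C := fun n => x (Finsupp.single n 1) with hfx
    obtain ⟨g, hg⟩ := hsurj fx
    refine ⟨ModuleCat.ofHom (Finsupp.lsum R fun n => LinearMap.toSpanSingleton R C (g n)), ?_⟩
    show Q.d 0 1 _ = x
    refine (hd01 _).trans ?_
    rw [Kc_d_one_zero]
    apply ModuleCat.hom_ext
    apply Finsupp.lhom_ext
    intro n r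
    show (Finsupp.lsum R fun n => LinearMap.toSpanSingleton R C (g n)) (dAux a (Finsupp.single n r)) = x (Finsupp.single n r)
    rw [dAux_single, map_sub, map_smul]
    simp only [Finsupp.lsum_single, LinearMap.toSpanSingleton_apply]
    have := congrFun hg n
    rw [seqT_apply] at this
    calc r • g n - a • r • g (n + 1) = r • (g n - a • g (n + 1)) := by
          rw [smul_sub, smul_comm a r]
      _ = r • fx n := by rw [this]
      _ = x (Finsupp.single n r) := by
          have hsingle : (Finsupp.single n r : ℕ →₀ R) = r • Finsupp.single n 1 := by
            rw [Finsupp.smul_single, smul_eq_mul, mul_one]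
          erw [hsingle, map_smul, hfx]
  
end
end ExtSide


theorem isContramodule_iff_bijective_seqT {R : Type} [CommRing R] [IsDomain R] (a : R)
    (ha : a ≠ 0) (C : Type) [AddCommGroup C] [Module R C] :
    IsContramodule R a C ↔ Bijective (seqT a C) := by
  unfold IsContramodule
  rw [subsingleton_hom_iff_injective a ha, subsingleton_ext_iff_surjective R a C ha]
  exact Iff.rfl

/-- An abelian group with two commuting endomorphisms `r`, `s` is the same
thing as a module `C` over `ℤ[r,s] = MvPolynomial (Fin 2) ℤ` (with `r = X 0`, `s = X 1`).
If `C` admits an `s`-power infinite summation operation (equivalently, `C` is an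
`s`-contramodule), then `C` admits an `(rs)`-power infinite summation operation
(is an `rs`-contramodule). -/
theorem isContramodule_mul_of_isContramodule
    (C : Type) [AddCommGroup C] [Module (MvPolynomial (Fin 2) ℤ) C]
    (h : IsContramodule (MvPolynomial (Fin 2) ℤ) (MvPolynomial.X 1) C) :
    IsContramodule (MvPolynomial (Fin 2) ℤ) (MvPolynomial.X 0 * MvPolynomial.X 1) C := by
  rw [isContramodule_iff_bijective_seqT _ (MvPolynomial.X_ne_zero 1) C] at h
  rw [isContramodule_iff_bijective_seqT _
    (mul_ne_zero (MvPolynomial.X_ne_zero 0) (MvPolynomial.X_ne_zero 1)) C]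
  exact seqT_mul_bijective _ _ h
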